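/- Let t be a total order on {1,…,k} given in ascending ordering [x₁,…,x_k], and let i = x_a be an element whose 'value interval' is {x_a, x_{a+1}, …, x_b} with a < b. Define the pivot of t at i as the total order t' with ascending ordering [x₁,…,x_{a-1}, x_{a+1},…, x_b, x_a, x_{b+1},…, x_k]. Then t' is a total order, and the set of pairs inverted between t and t' is exactly {(x_a, x_c) : a < c ≤ b}. -/
import Mathlib


/-- New rank function after pivoting: the element of rank `a` is moved to rank `b`,
and elements of ranks `a+1,…,b` are shifted down by one. -/
def pivotRank {k : ℕ} (ρ : Fin k ≃ Fin k) (a b : Fin k) (u : Fin k) : Fin k :=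
  if ρ u = a then b
  else if (a : ℕ) < (ρ u : ℕ) ∧ (ρ u : ℕ) ≤ (b : ℕ) then
    ⟨(ρ u : ℕ) - 1, lt_of_le_of_lt (Nat.sub_le _ _) (ρ u).isLt⟩
  else ρ u

theorem stmt15 {k : ℕ} (ρ : Fin k ≃ Fin k) (v : Fin k → ℝ) (a b : Fin k)
    (hab : a < b)
    (hint : ∀ u : Fin k, v u = v (ρ.symm a) ↔ (a ≤ ρ u ∧ ρ u ≤ b)) :
    Function.Bijective (pivotRank ρ a b) ∧
    (∀ u w : Fin k,
      (ρ u < ρ w ∧ pivotRank ρ a b w < pivotRank ρ a b u) ↔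
      (ρ u = a ∧ a < ρ w ∧ ρ w ≤ b)) := by
  have hab' : (a : ℕ) < (b : ℕ) := hab
  constructor
  · rw [Finite.injective_iff_bijective.symm]
    intro u w h
    apply ρ.injective
    unfold pivotRank at h
    split_ifs at h with h1 h2 h3 h4 h5 h6 h7 <;>
      simp only [Fin.ext_iff] at * <;> omega
  · intro u w
    unfold pivotRank
    split_ifs with h1 h2 h3 h4 h5 h6 h7 <;>
      simp only [Fin.lt_def, Fin.le_def, Fin.ext_iff] at * <;> omega
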